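/- arXiv:1807.06570 — 2 statements merged into one kernel-verified Lean document; each statement's English description precedes it below -/
import Mathlib

section
/- Let o have residue field of characteristic 2 and let A ∈ M_2(o_{ℓ'}) have cyclic reduction mod π. Write w(A) = min{val(trace A), ℓ'} = k. If trace(A) ≠ 0 is written π^k·u with u a unit (or trace(A)=0 when val ≥ ℓ'), then defining δ(A) as the least index i < ⌊k/2⌋ with (det A)_{2i+1} ≠ 0 (and δ(A) = ⌊k/2⌋ if no such i exists), and defining s by: s = 2⌊k/2⌋+1 if det(A) is a square mod π^k, and s = m if det(A) = v₁² + π^m v₂² mod π^k with m < k odd and v₂ a unit — then δ(A) = ⌊s/2⌋. -/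
open scoped Classical

/-- The finite ring `o_{ℓ'} = F[[t]]/(t^{ℓ'})` for a field `F` of characteristic 2. -/
abbrev OFq (F : Type*) [Field F] (r : ℕ) : Type _ :=
  PowerSeries F ⧸ Ideal.span {(PowerSeries.X : PowerSeries F) ^ r}

/-- The `i`-th coefficient `(v)_i ∈ F` of the canonical expansion of `v ∈ o_r`. -/
noncomputable def coeffQ (F : Type*) [Field F] (r i : ℕ) (v : OFq F r) : F :=
  PowerSeries.coeff (R := F) i
    (Function.surjInv (f := Ideal.Quotient.mk (Ideal.span {(PowerSeries.X : PowerSeries F) ^ r}))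
      Ideal.Quotient.mk_surjective v)

/-- The image of the uniformizer `π` in `o_r`. -/
noncomputable def Xbar (F : Type*) [Field F] (r : ℕ) : OFq F r :=
  Ideal.Quotient.mk (Ideal.span {(PowerSeries.X : PowerSeries F) ^ r}) PowerSeries.X

/-- A 2×2 matrix `A` over a commutative ring is *cyclic* if there is a vector `v`
such that `{v, A.mulVec v}` is a basis of the free module `R²`. -/
def Mat2Cyclic {R : Type*} [CommRing R] (A : Matrix (Fin 2) (Fin 2) R) : Prop :=
  ∃ (v : Fin 2 → R) (b : Module.Basis (Fin 2) R (Fin 2 → R)), b 0 = v ∧ b 1 = A.mulVec v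

lemma coeffQ_mk {F : Type*} [Field F] {r i : ℕ} (hi : i < r) (p : PowerSeries F) :
    coeffQ F r i (Ideal.Quotient.mk (Ideal.span {(PowerSeries.X : PowerSeries F) ^ r}) p) =
      PowerSeries.coeff (R := F) i p := by
  set I := Ideal.span {(PowerSeries.X : PowerSeries F) ^ r}
  set q := Function.surjInv (f := Ideal.Quotient.mk I) Ideal.Quotient.mk_surjective
    (Ideal.Quotient.mk I p) with hq
  have h1 : Ideal.Quotient.mk I q = Ideal.Quotient.mk I p :=
    Function.surjInv_eq Ideal.Quotient.mk_surjective _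
  have h2 : q - p ∈ I := Ideal.Quotient.eq.mp h1
  have h3 : (PowerSeries.X : PowerSeries F) ^ r ∣ q - p :=
    Ideal.mem_span_singleton.mp h2
  have h4 : PowerSeries.coeff (R := F) i (q - p) = 0 :=
    PowerSeries.X_pow_dvd_iff.mp h3 i hi
  have : PowerSeries.coeff (R := F) i q = PowerSeries.coeff (R := F) i p := by
    have h5 := map_sub (PowerSeries.coeff (R := F) i) q p
    rw [h4] at h5
    exact sub_eq_zero.mp h5.symm
  simpa [coeffQ] using this

lemma coeff_sq_odd {F : Type*} [Field F] [CharP F 2] (g : PowerSeries F) (m : ℕ) :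
    PowerSeries.coeff (R := F) (2 * m + 1) (g ^ 2) = 0 := by
  rw [sq, PowerSeries.coeff_mul]
  apply Finset.sum_involution (fun p _ => p.swap)
  · intro a _
    simp [mul_comm, CharTwo.add_self_eq_zero]
  · intro a ha hfa
    intro hcon
    have h1 : a.1 + a.2 = 2 * m + 1 := Finset.HasAntidiagonal.mem_antidiagonal.mp ha
    have : a.1 = a.2 := by
      have := congrArg Prod.fst hcon; simpa using this.symm
    omega
  · intro a ha; simp
  · intro a ha
    rw [Finset.HasAntidiagonal.mem_antidiagonal] at ha ⊢
    simpa [add_comm] using ha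

/-- Constant-coefficient ring hom on the quotient. -/
noncomputable def ccQ (F : Type*) [Field F] (r : ℕ) (hr : 1 ≤ r) : OFq F r →+* F :=
  Ideal.Quotient.lift _ (PowerSeries.constantCoeff (R := F)) (by
    intro a ha
    obtain ⟨b, hb⟩ := Ideal.mem_span_singleton.mp ha
    rw [hb, map_mul, map_pow, PowerSeries.constantCoeff_X, zero_pow (by omega), zero_mul])

lemma ccQ_mk {F : Type*} [Field F] {r : ℕ} (hr : 1 ≤ r) (p : PowerSeries F) :
    ccQ F r hr (Ideal.Quotient.mk _ p) = PowerSeries.constantCoeff (R := F) p := rfl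

/-- with `k = min(val(trace A), ℓ')` and `s` defined by the parity pattern of
`det A` modulo `π^k`, the odd depth `δ(A)` (least `i < ⌊k/2⌋` with `(det A)_{2i+1} ≠ 0`,
and `⌊k/2⌋` if none exists) equals `⌊s/2⌋`. -/
theorem stmt_14 {F : Type*} [Field F] [Fintype F] [CharP F 2]
    (ℓ' : ℕ) (hℓ' : 1 ≤ ℓ')
    (hle1 : Ideal.span {(PowerSeries.X : PowerSeries F) ^ ℓ'} ≤
      Ideal.span {(PowerSeries.X : PowerSeries F)})
    (A : Matrix (Fin 2) (Fin 2) (OFq F ℓ'))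
    (hcyc : Mat2Cyclic (A.map (⇑(Ideal.Quotient.factor
      (S := Ideal.span {(PowerSeries.X : PowerSeries F) ^ ℓ'})
      (T := Ideal.span {(PowerSeries.X : PowerSeries F)}) hle1))))
    (k : ℕ) (hkle : k ≤ ℓ')
    (hk1 : ∀ i, i < k → coeffQ F ℓ' i A.trace = 0)
    (hk2 : k < ℓ' → coeffQ F ℓ' k A.trace ≠ 0)
    (s : ℕ)
    (hs : (s = 2 * (k / 2) + 1 ∧
            ∃ v : OFq F ℓ', A.det - v ^ 2 ∈ Ideal.span {Xbar F ℓ' ^ k}) ∨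
          (s < k ∧ Odd s ∧
            ∃ (v₁ : OFq F ℓ') (v₂ : (OFq F ℓ')ˣ),
              A.det - (v₁ ^ 2 + Xbar F ℓ' ^ s * (v₂ : OFq F ℓ') ^ 2) ∈
                Ideal.span {Xbar F ℓ' ^ k})) :
    (if ∃ i, i < k / 2 ∧ coeffQ F ℓ' (2 * i + 1) A.det ≠ 0 then
        sInf {i | i < k / 2 ∧ coeffQ F ℓ' (2 * i + 1) A.det ≠ 0}
      else k / 2) = s / 2 := by
  set I := Ideal.span {(PowerSeries.X : PowerSeries F) ^ ℓ'} with hI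
  rcases hs with ⟨hs1, v, hv⟩ | ⟨hsk, hsodd, v₁, v₂, hv⟩
  · -- square case
    obtain ⟨c, hc⟩ := Ideal.mem_span_singleton.mp hv
    obtain ⟨g, hg⟩ := Ideal.Quotient.mk_surjective v
    obtain ⟨h, hh⟩ := Ideal.Quotient.mk_surjective c
    have hdet : A.det = Ideal.Quotient.mk I
        (g ^ 2 + PowerSeries.X ^ k * h) := by
      have h0 : A.det = v ^ 2 + Xbar F ℓ' ^ k * c := by linear_combination hc
      rw [h0, map_add, map_mul, map_pow, map_pow, hg, hh]
      rfl
    have key : ∀ i, i < k / 2 → coeffQ F ℓ' (2 * i + 1) A.det = 0 := by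
      intro i hi
      have h1 : 2 * i + 1 < k := by omega
      rw [hdet, coeffQ_mk (by omega)]
      rw [map_add, coeff_sq_odd,
        PowerSeries.X_pow_dvd_iff.mp (dvd_mul_right _ _) _ h1, add_zero]
    rw [if_neg (by push_neg; intro i hi; simpa using key i hi)]
    omega
  · -- non-square case
    obtain ⟨m, hm⟩ := hsodd
    have hms : s = 2 * m + 1 := by omega
    obtain ⟨c, hc⟩ := Ideal.mem_span_singleton.mp hv
    obtain ⟨g₁, hg₁⟩ := Ideal.Quotient.mk_surjective v₁
    obtain ⟨g₂, hg₂⟩ := Ideal.Quotient.mk_surjective (v₂ : OFq F ℓ')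
    obtain ⟨h, hh⟩ := Ideal.Quotient.mk_surjective c
    have hdet : A.det = Ideal.Quotient.mk I
        (g₁ ^ 2 + PowerSeries.X ^ s * g₂ ^ 2 + PowerSeries.X ^ k * h) := by
      have h0 : A.det = v₁ ^ 2 + Xbar F ℓ' ^ s * (v₂ : OFq F ℓ') ^ 2 + Xbar F ℓ' ^ k * c := by
        linear_combination hc
      rw [h0, map_add, map_add, map_mul, map_mul, map_pow, map_pow, map_pow, map_pow,
        hg₁, hg₂, hh]
      rfl
    have keyA : ∀ i, 2 * i + 1 < s → coeffQ F ℓ' (2 * i + 1) A.det = 0 := by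
      intro i hi
      rw [hdet, coeffQ_mk (by omega)]
      rw [map_add, map_add, coeff_sq_odd,
        PowerSeries.X_pow_dvd_iff.mp (dvd_mul_right _ _) _ hi,
        PowerSeries.X_pow_dvd_iff.mp (dvd_mul_right _ _) _ (by omega : 2 * i + 1 < k)]
      ring
    have hccu : PowerSeries.constantCoeff (R := F) g₂ ≠ 0 := by
      have hu : IsUnit (ccQ F ℓ' hℓ' (v₂ : OFq F ℓ')) := v₂.isUnit.map _
      rw [← hg₂, ccQ_mk] at hu
      exact hu.ne_zero
    have keyB : coeffQ F ℓ' (2 * m + 1) A.det ≠ 0 := by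
      rw [hdet, coeffQ_mk (by omega)]
      rw [← hms, map_add, map_add]
      have e0 : PowerSeries.coeff (R := F) s (g₁ ^ 2) = 0 := by
        rw [hms]; exact coeff_sq_odd g₁ m
      have e2 : PowerSeries.coeff (R := F) s (PowerSeries.X ^ k * h) = 0 :=
        PowerSeries.X_pow_dvd_iff.mp (dvd_mul_right _ _) _ hsk
      have e1 : PowerSeries.coeff (R := F) s (PowerSeries.X ^ s * g₂ ^ 2)
          = (PowerSeries.constantCoeff (R := F) g₂) ^ 2 := by
        have hx := PowerSeries.coeff_X_pow_mul (g₂ ^ 2) s 0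
        rw [zero_add] at hx
        rw [hx, PowerSeries.coeff_zero_eq_constantCoeff, map_pow]
      rw [e0, e1, e2, zero_add, add_zero]
      exact pow_ne_zero 2 hccu
    have hmlt : m < k / 2 := by omega
    have hmem : m ∈ {i | i < k / 2 ∧ coeffQ F ℓ' (2 * i + 1) A.det ≠ 0} := ⟨hmlt, keyB⟩
    rw [if_pos ⟨m, hmlt, keyB⟩]
    have h1 : sInf {i | i < k / 2 ∧ coeffQ F ℓ' (2 * i + 1) A.det ≠ 0} ≤ m :=
      Nat.sInf_le hmem
    have h2 := Nat.sInf_mem (⟨m, hmem⟩ :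
      Set.Nonempty {i | i < k / 2 ∧ coeffQ F ℓ' (2 * i + 1) A.det ≠ 0})
    obtain ⟨h2a, h2b⟩ := h2
    have h3 : ¬ sInf {i | i < k / 2 ∧ coeffQ F ℓ' (2 * i + 1) A.det ≠ 0} < m :=
      fun hlt => h2b (keyA _ (by omega))
    have h4 : sInf {i | i < k / 2 ∧ coeffQ F ℓ' (2 * i + 1) A.det ≠ 0} = m :=
      le_antisymm h1 (not_lt.mp h3)
    rw [h4]; omega
end

section
/- Let o have residue field of characteristic 2, let A ∈ M_2(o_{ℓ'}) be of the companion form [[0, a⁻¹α],[a, β]], and let à be any lift to M_2(o_r). Define h_Ã^{ℓ'} = { x ∈ o_r : 2x ≡ 0 mod π^{ℓ'} and x(x+β̃) ≡ 0 mod π^{ℓ'} }. If char(o) = 2, then h_Ã^{ℓ'} equals {0, β̃} + π^{ℓ'−val(β)}o_r when val(β) < ⌈ℓ'/2⌉, and equals π^{⌈ℓ'/2⌉}o_r when val(β) ≥ ⌈ℓ'/2⌉; in particular |h_Ã^{ℓ'}| = 2·q^{r−ℓ'+val(β)} in the first case and q^{r−⌈ℓ'/2⌉} in the second. -/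
open PowerSeries


noncomputable def qmk (F : Type*) [Field F] (r : ℕ) : PowerSeries F →+* OFq F r :=
  Ideal.Quotient.mk (Ideal.span {(PowerSeries.X : PowerSeries F) ^ r})

section helpers
variable {F : Type*} [Field F] {r : ℕ}

lemma qmk_surj : Function.Surjective (qmk F r) := Ideal.Quotient.mk_surjective

lemma Xbar_pow (k : ℕ) : Xbar F r ^ k = qmk F r (X ^ k) := by
  rw [Xbar, qmk, map_pow]

lemma mem_span_iff {k : ℕ} (hk : k ≤ r) (p : PowerSeries F) :
    qmk F r p ∈ Ideal.span {Xbar F r ^ k} ↔ (X : PowerSeries F) ^ k ∣ p := by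
  rw [Xbar_pow, Ideal.mem_span_singleton]
  constructor
  · rintro ⟨c, hc⟩
    obtain ⟨q, rfl⟩ := qmk_surj c
    rw [← map_mul] at hc
    have h2 : p - X ^ k * q ∈ Ideal.span {(PowerSeries.X : PowerSeries F) ^ r} := by
      rw [← Ideal.Quotient.eq] at *; exact hc
    rw [Ideal.mem_span_singleton] at h2
    obtain ⟨d, hd⟩ := h2
    have : p = X ^ k * (q + X ^ (r - k) * d) := by
      have hxr : (X : PowerSeries F) ^ r = X ^ k * X ^ (r - k) := by
        rw [← pow_add]; congr 1; omega
      rw [mul_add, ← mul_assoc, ← hxr]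
      linear_combination hd
    exact ⟨_, this⟩
  · rintro ⟨q, rfl⟩
    exact ⟨qmk F r q, by rw [map_mul]⟩

lemma key_coeff (p q : PowerSeries F) (w w' : ℕ)
    (hp : ∀ i < w, coeff (R := F) i p = 0) (hq : ∀ i < w', coeff (R := F) i q = 0) :
    coeff (R := F) (w + w') (p * q) = coeff (R := F) w p * coeff (R := F) w' q := by
  rw [coeff_mul]
  rw [Finset.sum_eq_single (w, w')]
  · rintro ⟨i, j⟩ hmem hne
    rw [Finset.HasAntidiagonal.mem_antidiagonal] at hmem
    rcases lt_or_ge i w with h | h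
    · simp [hp i h]
    · have : j < w' := by
        rcases lt_or_ge j w' with h' | h'
        · exact h'
        · exfalso; apply hne; simp at hmem ⊢; constructor <;> omega
      simp [hq j this]
  · intro h; simp [Finset.mem_antidiagonal] at h

lemma exists_eq_iff_mem (k : ℕ) (x : OFq F r) :
    (∃ y, x = Xbar F r ^ k * y) ↔ x ∈ Ideal.span {Xbar F r ^ k} := by
  rw [Ideal.mem_span_singleton]
  exact ⟨fun ⟨y, hy⟩ => ⟨y, hy⟩, fun ⟨y, hy⟩ => ⟨y, hy⟩⟩

noncomputable def psiP (F : Type*) [Field F] (r k : ℕ) (c : Fin (r - k) → F) : PowerSeries F :=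
  ∑ i : Fin (r - k), PowerSeries.C (R := F) (c i) * X ^ (k + (i : ℕ))

lemma coeff_psiP {k : ℕ} (c : Fin (r - k) → F) (i : Fin (r - k)) :
    coeff (R := F) (k + (i : ℕ)) (psiP F r k c) = c i := by
  rw [psiP, map_sum, Finset.sum_eq_single i]
  · simp [coeff_X_pow]
  · intro j _ hj
    have : k + (i : ℕ) ≠ k + (j : ℕ) := fun h => hj (Fin.ext (by omega))
    simp [coeff_X_pow, this, Fin.val_inj, Ne.symm hj]
  · simp

lemma coeff_psiP_lt {k : ℕ} (c : Fin (r - k) → F) (j : ℕ) (hj : j < k) :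
    coeff (R := F) j (psiP F r k c) = 0 := by
  rw [psiP, map_sum]
  apply Finset.sum_eq_zero
  intro i _
  have : j ≠ k + (i : ℕ) := by omega
  simp [coeff_X_pow, this]

lemma psi_dvd {k : ℕ} (c : Fin (r - k) → F) : (X : PowerSeries F) ^ k ∣ psiP F r k c := by
  rw [X_pow_dvd_iff]; exact fun m hm => coeff_psiP_lt c m hm

lemma psi_inj {k : ℕ} (hk : k ≤ r) :
    Function.Injective (fun c : Fin (r - k) → F => qmk F r (psiP F r k c)) := by
  intro c c' h
  simp only at h
  have h2 : psiP F r k c - psiP F r k c' ∈ Ideal.span {(PowerSeries.X : PowerSeries F) ^ r} :=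
    Ideal.Quotient.eq.mp h
  rw [Ideal.mem_span_singleton, X_pow_dvd_iff] at h2
  funext i
  have hlt : k + (i : ℕ) < r := by omega
  have := h2 _ hlt
  rw [map_sub, sub_eq_zero, coeff_psiP, coeff_psiP] at this
  exact this

lemma psi_range {k : ℕ} (hk : k ≤ r) :
    Set.range (fun c : Fin (r - k) → F => qmk F r (psiP F r k c)) =
      {x : OFq F r | ∃ y, x = Xbar F r ^ k * y} := by
  ext x
  simp only [Set.mem_range, Set.mem_setOf_eq]
  constructor
  · rintro ⟨c, rfl⟩
    rw [exists_eq_iff_mem, mem_span_iff hk]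
    exact psi_dvd c
  · rintro ⟨y, rfl⟩
    obtain ⟨g, rfl⟩ := qmk_surj y
    refine ⟨fun i => coeff (R := F) (k + (i : ℕ)) (X ^ k * g), ?_⟩
    rw [Xbar_pow, ← map_mul]
    apply Ideal.Quotient.eq.mpr
    rw [Ideal.mem_span_singleton, X_pow_dvd_iff]
    intro m hm
    rw [map_sub, sub_eq_zero]
    rcases lt_or_ge m k with h | h
    · rw [coeff_psiP_lt _ _ h]
      have : (X : PowerSeries F) ^ k ∣ X ^ k * g := Dvd.intro g rfl
      rw [X_pow_dvd_iff] at this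
      exact (this m h).symm
    · have : m = k + ((⟨m - k, by omega⟩ : Fin (r - k)) : ℕ) := by simp; omega
      rw [this, coeff_psiP]

lemma card_span {k : ℕ} [Fintype F] (hk : k ≤ r) :
    Nat.card {x : OFq F r | ∃ y, x = Xbar F r ^ k * y} = Fintype.card F ^ (r - k) := by
  rw [← psi_range hk, Nat.card_range_of_injective (psi_inj hk), Nat.card_eq_fintype_card,
    Fintype.card_fun]
  simp

lemma psiP_sub {k : ℕ} (c c' : Fin (r - k) → F) :
    psiP F r k c - psiP F r k c' = psiP F r k (c - c') := by
  rw [psiP, psiP, psiP, ← Finset.sum_sub_distrib]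
  apply Finset.sum_congr rfl
  intro i _
  rw [Pi.sub_apply, map_sub, sub_mul]

lemma card_two {k : ℕ} [Fintype F] (hk : k ≤ r) (b : OFq F r)
    (hb : b ∉ Ideal.span {Xbar F r ^ k}) :
    Nat.card {x : OFq F r | ∃ y, x = Xbar F r ^ k * y ∨ x = b + Xbar F r ^ k * y} =
      2 * Fintype.card F ^ (r - k) := by
  set Φ : Bool × (Fin (r - k) → F) → OFq F r :=
    fun sc => (cond sc.1 b 0) + qmk F r (psiP F r k sc.2) with hΦ
  have hmem : ∀ c : Fin (r - k) → F, qmk F r (psiP F r k c) ∈ Ideal.span {Xbar F r ^ k} :=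
    fun c => (mem_span_iff hk _).mpr (psi_dvd c)
  have hrange : Set.range Φ =
      {x : OFq F r | ∃ y, x = Xbar F r ^ k * y ∨ x = b + Xbar F r ^ k * y} := by
    ext x
    simp only [Set.mem_range, Set.mem_setOf_eq]
    constructor
    · rintro ⟨⟨s, c⟩, rfl⟩
      have hc : ∃ y, qmk F r (psiP F r k c) = Xbar F r ^ k * y :=
        (exists_eq_iff_mem k _).mpr (hmem c)
      obtain ⟨y, hy⟩ := hc
      cases s
      · exact ⟨y, Or.inl (by simp [hΦ, hy])⟩
      · exact ⟨y, Or.inr (by simp [hΦ, hy])⟩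
    · rintro ⟨y, hy | hy⟩
      · have : Xbar F r ^ k * y ∈ Set.range (fun c : Fin (r - k) → F => qmk F r (psiP F r k c)) := by
          rw [psi_range hk]; exact ⟨y, rfl⟩
        obtain ⟨c, hc⟩ := this
        exact ⟨(false, c), by simp [hΦ, hc, hy]⟩
      · have : Xbar F r ^ k * y ∈ Set.range (fun c : Fin (r - k) → F => qmk F r (psiP F r k c)) := by
          rw [psi_range hk]; exact ⟨y, rfl⟩
        obtain ⟨c, hc⟩ := this
        exact ⟨(true, c), by simp [hΦ, hc, hy]⟩
  have hinj : Function.Injective Φ := by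
    rintro ⟨s, c⟩ ⟨s', c'⟩ h
    simp only [hΦ] at h
    have hdiag : ∀ c c' : Fin (r - k) → F, qmk F r (psiP F r k c) = b + qmk F r (psiP F r k c') →
        False := by
      intro d d' hd
      apply hb
      have : b = qmk F r (psiP F r k (d - d')) := by
        rw [← psiP_sub, map_sub, eq_sub_iff_add_eq]
        exact hd.symm
      rw [this]
      exact hmem _
    cases s <;> cases s' <;> simp only [Bool.cond_false, Bool.cond_true, zero_add] at h
    · have := psi_inj hk h
      simp [this]
    · exact absurd h (fun h => hdiag _ _ h)
    · exact absurd h.symm (fun h => hdiag _ _ h)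
    · have := psi_inj hk (add_left_cancel h)
      simp [this]
  rw [← hrange, Nat.card_range_of_injective hinj, Nat.card_eq_fintype_card]
  rw [Fintype.card_prod, Fintype.card_bool, Fintype.card_fun, Fintype.card_fin]

end helpers

set_option maxHeartbeats 1000000 in
/-- in characteristic 2, the group
`h_Ã^{ℓ'} = { x ∈ o_r : 2x ≡ 0 and x(x+β̃) ≡ 0 mod π^{ℓ'} }` equals
`{0, β̃} + π^{ℓ'−v}o_r` when `v = val(β) < ⌈ℓ'/2⌉`, and `π^{⌈ℓ'/2⌉}o_r` when
`v ≥ ⌈ℓ'/2⌉`; with cardinalities `2·q^{r−ℓ'+v}` and `q^{r−⌈ℓ'/2⌉}` respectively. -/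
theorem stmt_16 {F : Type*} [Field F] [Fintype F] [CharP F 2]
    (r : ℕ) (hr : 2 ≤ r) (ℓ' : ℕ) (hℓ' : ℓ' = r / 2)
    (βt : OFq F r) (v : ℕ) (hvle : v ≤ ℓ')
    (hv1 : ∀ i, i < v → coeffQ F r i βt = 0)
    (hv2 : v < ℓ' → coeffQ F r v βt ≠ 0) :
    (v < (ℓ' + 1) / 2 →
      ({x : OFq F r | 2 * x ∈ Ideal.span {Xbar F r ^ ℓ'} ∧
          x * (x + βt) ∈ Ideal.span {Xbar F r ^ ℓ'}} =
        {x : OFq F r | ∃ y : OFq F r,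
          x = Xbar F r ^ (ℓ' - v) * y ∨ x = βt + Xbar F r ^ (ℓ' - v) * y}) ∧
      Nat.card {x : OFq F r | 2 * x ∈ Ideal.span {Xbar F r ^ ℓ'} ∧
          x * (x + βt) ∈ Ideal.span {Xbar F r ^ ℓ'}} =
        2 * Fintype.card F ^ (r - ℓ' + v)) ∧
    ((ℓ' + 1) / 2 ≤ v →
      ({x : OFq F r | 2 * x ∈ Ideal.span {Xbar F r ^ ℓ'} ∧
          x * (x + βt) ∈ Ideal.span {Xbar F r ^ ℓ'}} =
        {x : OFq F r | ∃ y : OFq F r, x = Xbar F r ^ ((ℓ' + 1) / 2) * y}) ∧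
      Nat.card {x : OFq F r | 2 * x ∈ Ideal.span {Xbar F r ^ ℓ'} ∧
          x * (x + βt) ∈ Ideal.span {Xbar F r ^ ℓ'}} =
        Fintype.card F ^ (r - (ℓ' + 1) / 2)) := by
  classical
  have hℓr : ℓ' ≤ r := by omega
  have hℓ1 : 1 ≤ ℓ' := by omega
  -- the canonical lift of βt
  set b : PowerSeries F := Function.surjInv
      (f := Ideal.Quotient.mk (Ideal.span {(PowerSeries.X : PowerSeries F) ^ r}))
      Ideal.Quotient.mk_surjective βt with hbdef
  have hqb : qmk F r b = βt := Function.surjInv_eq _ _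
  have hb1 : ∀ i, i < v → coeff (R := F) i b = 0 := hv1
  have hb2 : v < ℓ' → coeff (R := F) v b ≠ 0 := hv2
  -- characteristic two facts
  have h20 : (2 : OFq F r) = 0 := by
    calc (2 : OFq F r) = algebraMap F (OFq F r) (2 : F) := (map_ofNat _ 2).symm
    _ = algebraMap F (OFq F r) 0 := by rw [CharTwo.two_eq_zero]
    _ = 0 := map_zero _
  have h2 : ∀ x : OFq F r, 2 * x = 0 := fun x => by rw [h20, zero_mul]
  have h2βt : 2 * βt = 0 := h2 βt
  -- βt is divisible by Xbar^v
  have hbv : Xbar F r ^ v ∣ βt := by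
    have hd : (X : PowerSeries F) ^ v ∣ b := X_pow_dvd_iff.mpr hb1
    obtain ⟨u, hu⟩ := hd
    exact ⟨qmk F r u, by rw [← hqb, hu, map_mul, Xbar_pow]⟩
  -- minimal nonzero coefficient extraction
  have min_idx : ∀ (q : PowerSeries F) (n : ℕ), ¬ (X : PowerSeries F) ^ n ∣ q →
      ∃ w, w < n ∧ (∀ i, i < w → coeff (R := F) i q = 0) ∧ coeff (R := F) w q ≠ 0 := by
    intro q n hq
    rw [X_pow_dvd_iff] at hq
    push_neg at hq
    obtain ⟨m, hm, hm0⟩ := hq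
    have hex : ∃ w, coeff (R := F) w q ≠ 0 := ⟨m, hm0⟩
    refine ⟨Nat.find hex, lt_of_le_of_lt (Nat.find_le hm0) hm, ?_, Nat.find_spec hex⟩
    intro i hi
    by_contra hcon
    exact Nat.find_min hex hi hcon
  -- the key contradiction lemma
  have key2 : ∀ (p : PowerSeries F) (w w' : ℕ), w + w' < ℓ' →
      (∀ i, i < w → coeff (R := F) i p = 0) → coeff (R := F) w p ≠ 0 →
      (∀ i, i < w' → coeff (R := F) i (p + b) = 0) → coeff (R := F) w' (p + b) ≠ 0 →
      ¬ ((X : PowerSeries F) ^ ℓ' ∣ p * (p + b)) := by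
    intro p w w' hsum hp hpw hq hqw hdvd
    have hk := key_coeff p (p + b) w w' hp hq
    rw [X_pow_dvd_iff] at hdvd
    rw [hdvd _ hsum] at hk
    rcases mul_eq_zero.mp hk.symm with h | h
    · exact hpw h
    · exact hqw h
  -- product identity under the quotient map
  have hprod : ∀ p : PowerSeries F, qmk F r p * (qmk F r p + βt) = qmk F r (p * (p + b)) := by
    intro p
    rw [map_mul, map_add, hqb]
  -- the condition set simplification
  have hcond : ∀ x : OFq F r,
      (2 * x ∈ Ideal.span {Xbar F r ^ ℓ'} ∧ x * (x + βt) ∈ Ideal.span {Xbar F r ^ ℓ'}) ↔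
        x * (x + βt) ∈ Ideal.span {Xbar F r ^ ℓ'} := by
    intro x
    constructor
    · exact fun h => h.2
    · intro h
      refine ⟨?_, h⟩
      rw [h2 x]
      exact zero_mem _
  constructor
  · -- Case 1 : v < ⌈ℓ'/2⌉
    intro hcase
    have h2v : 2 * v < ℓ' := by omega
    have hvℓ : v < ℓ' := by omega
    have hbne : coeff (R := F) v b ≠ 0 := hb2 hvℓ
    have hkr : ℓ' - v ≤ r := by omega
    have hset : {x : OFq F r | 2 * x ∈ Ideal.span {Xbar F r ^ ℓ'} ∧
          x * (x + βt) ∈ Ideal.span {Xbar F r ^ ℓ'}} =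
        {x : OFq F r | ∃ y : OFq F r,
          x = Xbar F r ^ (ℓ' - v) * y ∨ x = βt + Xbar F r ^ (ℓ' - v) * y} := by
      ext x
      simp only [Set.mem_setOf_eq, hcond]
      constructor
      · intro hx
        obtain ⟨p, rfl⟩ := qmk_surj x
        rw [hprod, mem_span_iff hℓr] at hx
        have hsplit : (X : PowerSeries F) ^ (ℓ' - v) ∣ p ∨
            (X : PowerSeries F) ^ (ℓ' - v) ∣ (p + b) := by
          by_contra hcon
          push_neg at hcon
          obtain ⟨w, hw, hwa, hwb⟩ := min_idx p (ℓ' - v) hcon.1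
          obtain ⟨w', hw', hwa', hwb'⟩ := min_idx (p + b) (ℓ' - v) hcon.2
          have hmin : w ≤ v ∨ w' ≤ v := by
            by_contra hmm
            push_neg at hmm
            have : coeff (R := F) v b = 0 := by
              have e1 : coeff (R := F) v p = 0 := hwa v hmm.1
              have e2 : coeff (R := F) v (p + b) = 0 := hwa' v hmm.2
              rw [map_add, e1, zero_add] at e2
              exact e2
            exact hbne this
          have hlt : w + w' < ℓ' := by omega
          exact key2 p w w' hlt hwa hwb hwa' hwb' hx
        rcases hsplit with ⟨g, hg⟩ | ⟨g, hg⟩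
        · exact ⟨qmk F r g, Or.inl (by rw [Xbar_pow, ← map_mul, ← hg])⟩
        · refine ⟨qmk F r g, Or.inr ?_⟩
          have h1 : βt + Xbar F r ^ (ℓ' - v) * qmk F r g = βt + (qmk F r p + βt) := by
            rw [Xbar_pow, ← map_mul, ← hg, map_add, hqb]
          rw [h1, add_comm (qmk F r p) βt, ← add_assoc, ← two_mul, h2βt, zero_add]
      · rintro ⟨y, hy | hy⟩
        · have dx : Xbar F r ^ (ℓ' - v) ∣ x := ⟨y, hy⟩
          have d1 : Xbar F r ^ ℓ' ∣ x * x := by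
            calc Xbar F r ^ ℓ' ∣ Xbar F r ^ ((ℓ' - v) + (ℓ' - v)) := pow_dvd_pow _ (by omega)
            _ = Xbar F r ^ (ℓ' - v) * Xbar F r ^ (ℓ' - v) := pow_add _ _ _
            _ ∣ x * x := mul_dvd_mul dx dx
          have d2 : Xbar F r ^ ℓ' ∣ x * βt := by
            calc Xbar F r ^ ℓ' = Xbar F r ^ ((ℓ' - v) + v) := by congr 1; omega
            _ = Xbar F r ^ (ℓ' - v) * Xbar F r ^ v := pow_add _ _ _
            _ ∣ x * βt := mul_dvd_mul dx hbv
          rw [mul_add]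
          exact Ideal.add_mem _ (Ideal.mem_span_singleton.mpr d1) (Ideal.mem_span_singleton.mpr d2)
        · set z := Xbar F r ^ (ℓ' - v) * y with hz
          have dz : Xbar F r ^ (ℓ' - v) ∣ z := ⟨y, rfl⟩
          have hxb : x + βt = z := by
            rw [hy, add_right_comm, ← two_mul, h2βt, zero_add]
          have d1 : Xbar F r ^ ℓ' ∣ z * z := by
            calc Xbar F r ^ ℓ' ∣ Xbar F r ^ ((ℓ' - v) + (ℓ' - v)) := pow_dvd_pow _ (by omega)
            _ = Xbar F r ^ (ℓ' - v) * Xbar F r ^ (ℓ' - v) := pow_add _ _ _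
            _ ∣ z * z := mul_dvd_mul dz dz
          have d2 : Xbar F r ^ ℓ' ∣ βt * z := by
            calc Xbar F r ^ ℓ' = Xbar F r ^ (v + (ℓ' - v)) := by congr 1; omega
            _ = Xbar F r ^ v * Xbar F r ^ (ℓ' - v) := pow_add _ _ _
            _ ∣ βt * z := mul_dvd_mul hbv dz
          have hxeq : x * (x + βt) = z * z + βt * z := by
            rw [hxb, hy, add_mul, add_comm]
          rw [hxeq]
          exact Ideal.add_mem _ (Ideal.mem_span_singleton.mpr d1) (Ideal.mem_span_singleton.mpr d2)
    refine ⟨hset, ?_⟩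
    rw [hset]
    have hbnotin : βt ∉ Ideal.span {Xbar F r ^ (ℓ' - v)} := by
      intro hmem
      rw [← hqb, mem_span_iff hkr, X_pow_dvd_iff] at hmem
      exact hbne (hmem v (by omega))
    have he : r - (ℓ' - v) = r - ℓ' + v := by omega
    rw [card_two hkr βt hbnotin, he]
  · -- Case 2 : v ≥ ⌈ℓ'/2⌉
    intro hcase
    set m : ℕ := (ℓ' + 1) / 2 with hm
    have hmℓ : m ≤ ℓ' := by omega
    have hmr : m ≤ r := by omega
    have h2m : ℓ' ≤ 2 * m := by omega
    have hset : {x : OFq F r | 2 * x ∈ Ideal.span {Xbar F r ^ ℓ'} ∧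
          x * (x + βt) ∈ Ideal.span {Xbar F r ^ ℓ'}} =
        {x : OFq F r | ∃ y : OFq F r, x = Xbar F r ^ m * y} := by
      ext x
      simp only [Set.mem_setOf_eq, hcond]
      constructor
      · intro hx
        obtain ⟨p, rfl⟩ := qmk_surj x
        rw [hprod, mem_span_iff hℓr] at hx
        have hdvd : (X : PowerSeries F) ^ m ∣ p := by
          by_contra hcon
          obtain ⟨w, hw, hwa, hwb⟩ := min_idx p m hcon
          have hwv : w < v := by omega
          have hqa : ∀ i, i < w → coeff (R := F) i (p + b) = 0 := by
            intro i hi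
            rw [map_add, hwa i hi, hb1 i (by omega), add_zero]
          have hqb' : coeff (R := F) w (p + b) ≠ 0 := by
            rw [map_add, hb1 w hwv, add_zero]
            exact hwb
          exact key2 p w w (by omega) hwa hwb hqa hqb' hx
        obtain ⟨g, hg⟩ := hdvd
        exact ⟨qmk F r g, by rw [Xbar_pow, ← map_mul, ← hg]⟩
      · rintro ⟨y, hy⟩
        have dx : Xbar F r ^ m ∣ x := ⟨y, hy⟩
        have d1 : Xbar F r ^ ℓ' ∣ x * x := by
          calc Xbar F r ^ ℓ' ∣ Xbar F r ^ (m + m) := pow_dvd_pow _ (by omega)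
          _ = Xbar F r ^ m * Xbar F r ^ m := pow_add _ _ _
          _ ∣ x * x := mul_dvd_mul dx dx
        have d2 : Xbar F r ^ ℓ' ∣ x * βt := by
          calc Xbar F r ^ ℓ' ∣ Xbar F r ^ (m + v) := pow_dvd_pow _ (by omega)
          _ = Xbar F r ^ m * Xbar F r ^ v := pow_add _ _ _
          _ ∣ x * βt := mul_dvd_mul dx hbv
        rw [mul_add]
        exact Ideal.add_mem _ (Ideal.mem_span_singleton.mpr d1) (Ideal.mem_span_singleton.mpr d2)
    refine ⟨hset, ?_⟩
    rw [hset, card_span hmr]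
end
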